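/- arXiv:1708.01517 — 2 statements merged into one kernel-verified Lean document; each statement's English description precedes it below -/
import Mathlib

section
/- Let 0 < h₁ < h₂ be real numbers, let N ≥ 1 and let j_1 < j_2 < … < j_N be positive integers. Then for every (c_0, c_1,…,c_N) ∈ ℝ^{N+1} with (c_0,…,c_N) ≠ 0, there exists h ∈ [h₁, h₂] such that c_0 + Σ_{i=1}^N c_i · (j_i · tanh(h·j_i))^{1/2} ≠ 0. (Equivalently, the vector (ω_{j_1}(h),…,ω_{j_N}(h),1) is non-degenerate on [h₁,h₂]: its image is not contained in any hyperplane through the origin of ℝ^{N+1}.) -/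
open Real Filter Topology


lemma myAnalyticAt_log {x : ℝ} (hx : 0 < x) : AnalyticAt ℝ Real.log x := by
  have hc : AnalyticAt ℂ Complex.log (x : ℂ) :=
    analyticAt_clog (Complex.ofReal_mem_slitPlane.2 hx)
  have h1 : AnalyticAt ℝ (fun y : ℝ => (Complex.log (y : ℂ)).re) x :=
    (Complex.reCLM.analyticAt _).comp
      ((hc.restrictScalars).comp (Complex.ofRealCLM.analyticAt x))
  refine h1.congr ?_
  filter_upwards [eventually_gt_nhds hx] with y hy
  rw [Complex.log_re, Complex.norm_real, Real.norm_eq_abs, Real.log_abs]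

lemma myAnalyticAt_sqrt {x : ℝ} (hx : 0 < x) : AnalyticAt ℝ Real.sqrt x := by
  have h1 : AnalyticAt ℝ (fun y : ℝ => Real.exp (Real.log y * (1/2))) x :=
    analyticAt_rexp.comp ((myAnalyticAt_log hx).mul analyticAt_const)
  refine h1.congr ?_
  filter_upwards [eventually_gt_nhds hx] with y hy
  rw [Real.sqrt_eq_rpow, Real.rpow_def_of_pos hy]

lemma myAnalyticAt_tanh (x : ℝ) : AnalyticAt ℝ Real.tanh x := by
  have hs : AnalyticAt ℝ Real.sinh x := by
    refine (((analyticAt_rexp.comp analyticAt_id).sub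
      (analyticAt_rexp.comp analyticAt_id.neg)).mul (analyticAt_const (v := (2:ℝ)⁻¹))).congr ?_
    filter_upwards with y using by simp [Real.sinh_eq]; ring
  have hcsh : AnalyticAt ℝ Real.cosh x := by
    refine (((analyticAt_rexp.comp analyticAt_id).add
      (analyticAt_rexp.comp analyticAt_id.neg)).mul (analyticAt_const (v := (2:ℝ)⁻¹))).congr ?_
    filter_upwards with y using by simp [Real.cosh_eq]; ring
  refine (hs.div hcsh (Real.cosh_pos x).ne').congr ?_
  filter_upwards with y using (Real.tanh_eq_sinh_div_cosh y).symm


lemma my_tanh_sub_one (x : ℝ) : Real.tanh x - 1 = -2 / (Real.exp (2*x) + 1) := by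
  have he : Real.exp (2*x) = Real.exp x * Real.exp x := by
    rw [two_mul, Real.exp_add]
  have h1 : (0:ℝ) < Real.exp x := Real.exp_pos x
  have h2 : (0:ℝ) < Real.exp (2*x) + 1 := by positivity
  rw [Real.tanh_eq_sinh_div_cosh, Real.sinh_eq, Real.cosh_eq, Real.exp_neg]
  have h3 : Real.exp x + (Real.exp x)⁻¹ > 0 := by positivity
  field_simp
  rw [he]; ring

lemma my_tanh_pos {x : ℝ} (hx : 0 < x) : 0 < Real.tanh x := by
  rw [Real.tanh_eq_sinh_div_cosh]
  exact div_pos (by rwa [Real.sinh_pos_iff]) (Real.cosh_pos x)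

lemma my_exp_div_atTop : Tendsto (fun x : ℝ => Real.exp (2*x) + 1) atTop atTop :=
  (Real.tendsto_exp_atTop.comp (tendsto_id.const_mul_atTop two_pos)).atTop_add tendsto_const_nhds

lemma my_tendsto_tanh : Tendsto Real.tanh atTop (𝓝 1) := by
  have h0 : Tendsto (fun x : ℝ => (-2) * (Real.exp (2*x) + 1)⁻¹) atTop (𝓝 ((-2)*0)) :=
    my_exp_div_atTop.inv_tendsto_atTop.const_mul (-2)
  have key : Tendsto (fun x : ℝ => 1 + (-2) / (Real.exp (2*x) + 1)) atTop (𝓝 1) := by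
    have := tendsto_const_nhds (α := ℝ) (f := atTop) (x := (1:ℝ)) |>.add h0
    simpa [div_eq_mul_inv] using this
  exact key.congr fun x => by have := my_tanh_sub_one x; linarith

lemma my_sqrt_tanh_tendsto {b : ℝ} (hb : 0 < b) :
    Tendsto (fun h : ℝ => Real.sqrt (Real.tanh (h*b))) atTop (𝓝 1) := by
  have h1 : Tendsto (fun h : ℝ => h*b) atTop atTop := tendsto_id.atTop_mul_const hb
  have h2 := (Real.continuous_sqrt.continuousAt (x := (1:ℝ))).tendsto.comp
    (my_tendsto_tanh.comp h1)
  simpa [Function.comp_def] using h2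

lemma my_term_tendsto {a b : ℝ} (ha : 0 < a) (hab : a ≤ b) :
    Tendsto (fun h : ℝ => Real.exp (2*a*h) * (Real.sqrt (Real.tanh (h*b)) - 1)) atTop
      (𝓝 (if a = b then (-1:ℝ) else 0)) := by
  have hb : 0 < b := lt_of_lt_of_le ha hab
  have hexpneg : Tendsto (fun h : ℝ => Real.exp (-(2*b)*h)) atTop (𝓝 0) :=
    Real.tendsto_exp_atBot.comp
      ((tendsto_const_mul_atBot_of_neg (by linarith)).2 tendsto_id)
  have hL : Tendsto (fun h : ℝ => Real.exp (2*(a-b)*h)) atTop (𝓝 (if a = b then 1 else 0)) := by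
    rcases eq_or_lt_of_le hab with rfl | hlt
    · simpa using tendsto_const_nhds (x := (1:ℝ)) (f := atTop (α := ℝ))
    · rw [if_neg hlt.ne]
      exact Real.tendsto_exp_atBot.comp
        ((tendsto_const_mul_atBot_of_neg (by linarith)).2 tendsto_id)
  have hmain : Tendsto (fun h : ℝ => (-2) * Real.exp (2*(a-b)*h) /
      ((1 + Real.exp (-(2*b)*h)) * (Real.sqrt (Real.tanh (h*b)) + 1))) atTop
      (𝓝 ((-2) * (if a = b then 1 else 0) / ((1+0)*(1+1)))) := by
    exact (hL.const_mul _).div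
      ((tendsto_const_nhds.add hexpneg).mul ((my_sqrt_tanh_tendsto hb).add tendsto_const_nhds))
      (by norm_num)
  have hval : ((-2:ℝ) * (if a = b then 1 else 0) / ((1+0)*(1+1))) = (if a = b then (-1:ℝ) else 0) := by
    split <;> norm_num
  rw [hval] at hmain
  refine Tendsto.congr' ?_ hmain
  filter_upwards [eventually_gt_atTop 0] with h hh
  have ht : 0 < Real.tanh (h*b) := my_tanh_pos (by positivity)
  have hs0 : 0 ≤ Real.sqrt (Real.tanh (h*b)) := Real.sqrt_nonneg _
  have hs1 : (0:ℝ) < Real.sqrt (Real.tanh (h*b)) + 1 := by positivity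
  have hsq2 : Real.sqrt (Real.tanh (h*b)) ^ 2 = Real.tanh (h*b) := Real.sq_sqrt ht.le
  have hE : (0:ℝ) < Real.exp (2*(h*b)) := Real.exp_pos _
  have h2 : Real.sqrt (Real.tanh (h*b)) - 1
      = (Real.tanh (h*b) - 1)/(Real.sqrt (Real.tanh (h*b)) + 1) := by
    rw [eq_div_iff hs1.ne']
    nlinarith [hsq2]
  have hA : Real.exp (2*(a-b)*h) = Real.exp (2*a*h) * (Real.exp (2*(h*b)))⁻¹ := by
    rw [← Real.exp_neg, ← Real.exp_add]; ring_nf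
  have hB : Real.exp (-(2*b)*h) = (Real.exp (2*(h*b)))⁻¹ := by
    rw [← Real.exp_neg]; ring_nf
  rw [h2, my_tanh_sub_one, hA, hB]
  have hE1 : (0:ℝ) < Real.exp (2*(h*b)) + 1 := by positivity
  field_simp

lemma my_coeffs_zero {N : ℕ} (b : Fin N → ℝ) (hb : ∀ i, 0 < b i) (hmono : StrictMono b)
    (d : Fin N → ℝ)
    (hT : ∀ h : ℝ, 0 < h → ∑ i, d i * (Real.sqrt (Real.tanh (h * b i)) - 1) = 0) :
    ∀ i, d i = 0 := by
  by_contra hcon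
  push_neg at hcon
  obtain ⟨i₀, hi₀⟩ := hcon
  set S : Finset (Fin N) := Finset.univ.filter (fun i => d i ≠ 0) with hS
  have hSne : S.Nonempty := ⟨i₀, by simp [hS, hi₀]⟩
  set m := S.min' hSne with hm
  have hdm : d m ≠ 0 := by
    have := S.min'_mem hSne
    simpa [hS] using this
  have hlt : ∀ k, k < m → d k = 0 := by
    intro k hk
    by_contra hdk
    exact absurd (S.min'_le k (by simp [hS, hdk])) (not_le.2 hk)
  have hterm : ∀ i : Fin N, Tendsto
      (fun h : ℝ => d i * (Real.exp (2*(b m)*h) * (Real.sqrt (Real.tanh (h * b i)) - 1)))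
      atTop (𝓝 (if i = m then -d m else 0)) := by
    intro i
    rcases lt_trichotomy i m with hilt | heq | higt
    · rw [if_neg hilt.ne]
      simp only [hlt i hilt, zero_mul]
      exact tendsto_const_nhds
    · rw [if_pos heq, heq]
      have := (my_term_tendsto (hb m) (le_refl (b m))).const_mul (d m)
      simpa using this
    · rw [if_neg higt.ne']
      have hmono' : b m < b i := hmono higt
      have := (my_term_tendsto (hb m) hmono'.le).const_mul (d i)
      rw [if_neg hmono'.ne] at this
      simpa using this
  have hsum : Tendsto (fun h : ℝ => ∑ i, d i *
      (Real.exp (2*(b m)*h) * (Real.sqrt (Real.tanh (h * b i)) - 1))) atTop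
      (𝓝 (∑ i : Fin N, if i = m then -d m else 0)) :=
    tendsto_finset_sum _ fun i _ => hterm i
  have hsumval : (∑ i : Fin N, if i = m then -d m else 0) = -d m := by
    simp [Finset.sum_ite_eq']
  rw [hsumval] at hsum
  have hzero : (fun h : ℝ => ∑ i, d i *
      (Real.exp (2*(b m)*h) * (Real.sqrt (Real.tanh (h * b i)) - 1)))
      =ᶠ[atTop] (fun _ => (0:ℝ)) := by
    filter_upwards [eventually_gt_atTop 0] with h hh
    have : ∑ i, d i * (Real.exp (2*(b m)*h) * (Real.sqrt (Real.tanh (h * b i)) - 1))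
        = Real.exp (2*(b m)*h) * ∑ i, d i * (Real.sqrt (Real.tanh (h * b i)) - 1) := by
      rw [Finset.mul_sum]
      exact Finset.sum_congr rfl fun i _ => by ring
    rw [this, hT h hh, mul_zero]
  have := tendsto_nhds_unique (hsum.congr' hzero) tendsto_const_nhds
  exact hdm (by linarith)

/-- Non-degeneracy of (ω_{j_1}(h), …, ω_{j_N}(h), 1): for any finitely many distinct positive
integers j_1 < … < j_N and any (c₀, c) ∈ ℝ^{N+1} not identically zero, there is
h ∈ [h₁, h₂] with c₀ + Σ c_i ω_{j_i}(h) ≠ 0. -/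
theorem frequencies_and_one_nondegenerate (h₁ h₂ : ℝ) (hh₁ : 0 < h₁) (hh : h₁ < h₂)
    (N : ℕ) (hN : 1 ≤ N) (j : Fin N → ℕ) (hj1 : ∀ i, 1 ≤ j i) (hj : StrictMono j)
    (c₀ : ℝ) (c : Fin N → ℝ) (hc : ¬ (c₀ = 0 ∧ c = 0)) :
    ∃ h ∈ Set.Icc h₁ h₂,
      c₀ + (∑ i, c i * Real.sqrt ((j i : ℝ) * Real.tanh (h * (j i : ℝ)))) ≠ 0 := by
  by_contra hcontra
  push_neg at hcontra
  set F : ℝ → ℝ := fun h => c₀ + ∑ i, c i * Real.sqrt ((j i : ℝ) * Real.tanh (h * (j i : ℝ)))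
    with hF
  have hjpos : ∀ i, (0:ℝ) < (j i : ℝ) := fun i => by exact_mod_cast hj1 i
  -- F is analytic on (0, ∞)
  have hFan : AnalyticOnNhd ℝ F (Set.Ioi 0) := by
    intro h hh0
    rw [Set.mem_Ioi] at hh0
    refine analyticAt_const.add ?_
    refine Finset.analyticAt_fun_sum _ fun i _ => analyticAt_const.mul ?_
    have hinner : AnalyticAt ℝ (fun h : ℝ => (j i : ℝ) * Real.tanh (h * (j i : ℝ))) h :=
      analyticAt_const.mul ((myAnalyticAt_tanh _).comp (analyticAt_id.mul analyticAt_const))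
    have hpos : 0 < (j i : ℝ) * Real.tanh (h * (j i : ℝ)) :=
      mul_pos (hjpos i) (my_tanh_pos (mul_pos hh0 (hjpos i)))
    exact AnalyticAt.comp (g := Real.sqrt)
      (f := fun h : ℝ => (j i : ℝ) * Real.tanh (h * (j i : ℝ)))
      (myAnalyticAt_sqrt hpos) hinner
  -- F vanishes near the midpoint
  have hmid : h₁ < (h₁ + h₂)/2 ∧ (h₁ + h₂)/2 < h₂ := ⟨by linarith, by linarith⟩
  have hev : F =ᶠ[𝓝 ((h₁ + h₂)/2)] 0 := by
    filter_upwards [Icc_mem_nhds hmid.1 hmid.2] with x hx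
    exact hcontra x hx
  have hFzero : Set.EqOn F 0 (Set.Ioi 0) :=
    hFan.eqOn_zero_of_preconnected_of_eventuallyEq_zero isPreconnected_Ioi
      (by simp only [Set.mem_Ioi]; linarith) hev
  -- limit of F at infinity
  have hlim : Tendsto F atTop (𝓝 (c₀ + ∑ i, c i * Real.sqrt ((j i : ℝ)))) := by
    refine tendsto_const_nhds.add (tendsto_finset_sum _ fun i _ => ?_)
    have h1 : Tendsto (fun h : ℝ => h * (j i : ℝ)) atTop atTop :=
      tendsto_id.atTop_mul_const (hjpos i)
    have h2 : Tendsto (fun h : ℝ => (j i : ℝ) * Real.tanh (h * (j i : ℝ))) atTop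
        (𝓝 ((j i : ℝ) * 1)) := tendsto_const_nhds.mul (my_tendsto_tanh.comp h1)
    have h3 := ((Real.continuous_sqrt.continuousAt (x := ((j i : ℝ) * 1))).tendsto.comp h2)
    rw [mul_one] at h3
    exact tendsto_const_nhds.mul h3
  have hFev0 : F =ᶠ[atTop] (fun _ => (0:ℝ)) := by
    filter_upwards [eventually_gt_atTop 0] with h hh0
    exact hFzero (Set.mem_Ioi.2 hh0)
  have hsum0 : c₀ + ∑ i, c i * Real.sqrt ((j i : ℝ)) = 0 :=
    tendsto_nhds_unique (hlim.congr' hFev0) tendsto_const_nhds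
  -- apply the coefficient lemma
  set d : Fin N → ℝ := fun i => c i * Real.sqrt ((j i : ℝ)) with hd
  have hT : ∀ h : ℝ, 0 < h →
      ∑ i, d i * (Real.sqrt (Real.tanh (h * (j i : ℝ))) - 1) = 0 := by
    intro h hh0
    have hFh : F h = 0 := hFzero (Set.mem_Ioi.2 hh0)
    have hsplit : ∀ i : Fin N,
        d i * (Real.sqrt (Real.tanh (h * (j i : ℝ))) - 1)
        = c i * Real.sqrt ((j i : ℝ) * Real.tanh (h * (j i : ℝ)))
          - c i * Real.sqrt ((j i : ℝ)) := by
      intro i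
      rw [hd, Real.sqrt_mul (hjpos i).le]
      ring
    rw [Finset.sum_congr rfl fun i _ => hsplit i, Finset.sum_sub_distrib]
    have : ∑ i, c i * Real.sqrt ((j i : ℝ) * Real.tanh (h * (j i : ℝ))) = F h - c₀ := by
      rw [hF]; ring
    rw [this, hFh]
    linarith [hsum0]
  have hbmono : StrictMono (fun i => ((j i : ℕ) : ℝ)) := fun a b hab =>
    Nat.cast_lt.2 (hj hab)
  have hdz : ∀ i, d i = 0 := my_coeffs_zero _ hjpos hbmono d hT
  have hcz : c = 0 := by
    funext i
    have := hdz i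
    rw [hd] at this
    have hs : Real.sqrt ((j i : ℝ)) ≠ 0 := (Real.sqrt_pos.2 (hjpos i)).ne'
    exact (mul_eq_zero.1 this).resolve_right hs
  have hc0 : c₀ = 0 := by
    have : ∑ i, c i * Real.sqrt ((j i : ℝ)) = 0 := by
      rw [hcz]; simp
    linarith [hsum0]
  exact hc ⟨hc0, hcz⟩
end

section
/- (Exponentially small dependence of the linear frequencies on the depth.) For every h₁ > 0 and every k ∈ ℕ there exists a constant C_k > 0, depending only on k and h₁, such that for every integer j ≥ 1 and every real h ≥ h₁ one has |∂_h^k ( (j·tanh(h·j))^{1/2} − √j )| ≤ C_k · e^{−h·j}. In other words, writing ω_j(h) = √j + r(j,h), the remainder satisfies |∂_h^k r(j,h)| ≤ C_k e^{−h j} for all k ∈ ℕ and j ≥ 1, uniformly for h ≥ h₁. -/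
open Real Set Filter
open scoped ContDiff

noncomputable def H0 : ℝ → ℝ :=
  fun u => -2 / ((1+u) * (Real.sqrt ((1-u)/(1+u)) + 1))

private lemma tanh_exp (x : ℝ) :
    Real.tanh x = (1 - Real.exp (-(2*x))) / (1 + Real.exp (-(2*x))) := by
  rw [Real.tanh_eq_sinh_div_cosh, Real.sinh_eq, Real.cosh_eq]
  have h1 : Real.exp x ≠ 0 := (Real.exp_pos x).ne'
  have h2 : (0:ℝ) < 1 + Real.exp (-(2*x)) := by positivity
  have h3 : Real.exp x + Real.exp (-x) ≠ 0 := by positivity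
  have he : Real.exp (-(2*x)) = Real.exp (-x) * Real.exp (-x) := by
    rw [← Real.exp_add]; ring_nf
  have he2 : Real.exp (-x) = (Real.exp x)⁻¹ := Real.exp_neg x
  field_simp [he, he2]
  rw [show -(x*2) = -(2*x) by ring, he, he2]
  field_simp <;> ring

private lemma base_id (x : ℝ) (hx : 0 < x) :
    Real.sqrt (Real.tanh x) - 1
      = Real.exp (-(2*x)) * H0 (Real.exp (-(2*x))) := by
  set u := Real.exp (-(2*x)) with hu
  have hu0 : 0 < u := Real.exp_pos _
  have hu1 : u < 1 := by
    rw [hu]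
    have : -(2*x) < 0 := by linarith
    calc Real.exp (-(2*x)) < Real.exp 0 := Real.exp_lt_exp.2 this
      _ = 1 := Real.exp_zero
  have h1u : (0:ℝ) < 1 + u := by linarith
  have hA : (0:ℝ) ≤ (1-u)/(1+u) := by
    apply div_nonneg <;> linarith
  have ht : Real.tanh x = (1-u)/(1+u) := tanh_exp x
  have hs : Real.sqrt (Real.tanh x) = Real.sqrt ((1-u)/(1+u)) := by rw [ht]
  set s := Real.sqrt ((1-u)/(1+u)) with hsdef
  have hs0 : 0 ≤ s := Real.sqrt_nonneg _
  have hsq : s^2 = (1-u)/(1+u) := Real.sq_sqrt hA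
  have hden : s + 1 ≠ 0 := by positivity
  rw [hs, H0]
  have key : (s - 1) * ((1+u) * (s+1)) = u * (-2) := by
    have : (s-1)*(s+1) = s^2 - 1 := by ring
    have h2 : (s^2 - 1) * (1+u) = -(2*u) := by
      rw [hsq]; field_simp; ring
    nlinarith [h2]
  have hne : (1+u)*(s+1) ≠ 0 := by positivity
  have harr : u * (-2 / ((1 + u) * (s + 1))) = (u * -2) / ((1+u)*(s+1)) := by ring
  rw [harr, eq_div_iff hne]
  linarith [key]

private lemma H0_smooth : ContDiffOn ℝ ∞ H0 (Set.Ioo (-1:ℝ) 1) := by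
  have hd : ∀ u ∈ Set.Ioo (-1:ℝ) 1, (1+u) * (Real.sqrt ((1-u)/(1+u)) + 1) ≠ 0 := by
    intro u hu
    have h1 : (0:ℝ) < 1 + u := by linarith [hu.1]
    have h2 : (0:ℝ) ≤ Real.sqrt ((1-u)/(1+u)) := Real.sqrt_nonneg _
    positivity
  apply ContDiffOn.div contDiffOn_const _ hd
  apply ContDiffOn.mul
  · exact (contDiffOn_const.add contDiffOn_id)
  · apply ContDiffOn.add _ contDiffOn_const
    apply ContDiffOn.sqrt
    · apply ContDiffOn.div
      · exact contDiffOn_const.sub contDiffOn_id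
      · exact contDiffOn_const.add contDiffOn_id
      · intro u hu; intro h; linarith [hu.1]
    · intro u hu
      have h1 : (0:ℝ) < 1 + u := by linarith [hu.1]
      have h2 : (0:ℝ) < 1 - u := by linarith [hu.2]
      have : (0:ℝ) < (1-u)/(1+u) := by positivity
      exact this.ne'

private lemma key_induction (k : ℕ) :
    ∃ H : ℝ → ℝ, ContDiffOn ℝ ∞ H (Set.Ioo (-1:ℝ) 1) ∧
      ∀ j : ℕ, 1 ≤ j → ∀ t : ℝ, 0 < t →
        iteratedDeriv k
            (fun s : ℝ => Real.sqrt ((j : ℝ) * Real.tanh (s * (j : ℝ))) - Real.sqrt j) t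
          = Real.sqrt j * (j:ℝ)^k *
            (Real.exp (-(2*(t*(j:ℝ)))) * H (Real.exp (-(2*(t*(j:ℝ)))))) := by
  induction k with
  | zero =>
    refine ⟨H0, H0_smooth, ?_⟩
    intro j hj t ht
    have hj0 : (0:ℝ) < j := by exact_mod_cast hj
    have hx : 0 < t * (j:ℝ) := by positivity
    rw [iteratedDeriv_zero]
    simp only [pow_zero, mul_one]
    rw [Real.sqrt_mul (le_of_lt hj0)]
    have := base_id (t*(j:ℝ)) hx
    rw [show Real.sqrt (Real.tanh (t*(j:ℝ)))
        = 1 + Real.exp (-(2*(t*(j:ℝ)))) * H0 (Real.exp (-(2*(t*(j:ℝ))))) by linarith [this]]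
    ring
  | succ k ih =>
    obtain ⟨H, hH, hform⟩ := ih
    have hd : ContDiffOn ℝ ∞ (deriv H) (Set.Ioo (-1:ℝ) 1) :=
      hH.deriv_of_isOpen isOpen_Ioo (le_of_eq (by rfl))
    refine ⟨fun v => -2 * (H v + v * deriv H v), ?_, ?_⟩
    · exact contDiffOn_const.mul (hH.add (contDiffOn_id.mul hd))
    · intro j hj t ht
      have hj0 : (0:ℝ) < j := by exact_mod_cast hj
      have hx : 0 < t * (j:ℝ) := by positivity
      set c := Real.sqrt j * (j:ℝ)^k with hc
      have hev : (iteratedDeriv k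
            (fun s : ℝ => Real.sqrt ((j : ℝ) * Real.tanh (s * (j : ℝ))) - Real.sqrt j))
          =ᶠ[nhds t]
          (fun s => c * (Real.exp (-(2*(s*(j:ℝ)))) * H (Real.exp (-(2*(s*(j:ℝ))))))) := by
        filter_upwards [Ioi_mem_nhds ht] with s hs
        exact hform j hj s hs
      rw [iteratedDeriv_succ, hev.deriv_eq]
      set u := Real.exp (-(2*(t*(j:ℝ)))) with hu
      have hu0 : 0 < u := Real.exp_pos _
      have hu1 : u < 1 := by
        rw [hu]
        calc Real.exp (-(2*(t*(j:ℝ)))) < Real.exp 0 := Real.exp_lt_exp.2 (by linarith)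
          _ = 1 := Real.exp_zero
      have hmemH : u ∈ Set.Ioo (-1:ℝ) 1 := ⟨by linarith, hu1⟩
      have hHd : HasDerivAt H (deriv H u) u :=
        ((hH.differentiableOn (by simp)).differentiableAt
          (isOpen_Ioo.mem_nhds hmemH)).hasDerivAt
      have h1 : HasDerivAt (fun s : ℝ => -(2*(s*(j:ℝ)))) (-(2*(1*(j:ℝ)))) t :=
        (((hasDerivAt_id t).mul_const ((j:ℝ))).const_mul 2).neg
      have hud : HasDerivAt (fun s : ℝ => Real.exp (-(2*(s*(j:ℝ)))))
          (Real.exp (-(2*(t*(j:ℝ)))) * -(2*(1*(j:ℝ)))) t := h1.exp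
      have hcomp : HasDerivAt (fun s : ℝ => H (Real.exp (-(2*(s*(j:ℝ))))))
          (deriv H u * (Real.exp (-(2*(t*(j:ℝ)))) * -(2*(1*(j:ℝ))))) t :=
        hHd.comp t hud
      have hprod : HasDerivAt
          (fun s => c * (Real.exp (-(2*(s*(j:ℝ)))) * H (Real.exp (-(2*(s*(j:ℝ)))))))
          (c * ((Real.exp (-(2*(t*(j:ℝ)))) * -(2*(1*(j:ℝ)))) * H u
            + u * (deriv H u * (Real.exp (-(2*(t*(j:ℝ)))) * -(2*(1*(j:ℝ))))))) t :=
        (hud.mul hcomp).const_mul c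
      rw [hprod.deriv]
      rw [hc, ← hu]
      rw [pow_succ]
      ring

private lemma poly_exp (a : ℝ) (ha : 0 < a) (m : ℕ) (x : ℝ) (hx : 0 ≤ x) :
    x^m * Real.exp (-(a*x)) ≤ (m.factorial : ℝ) / a^m := by
  have h1 : (a*x)^m / (m.factorial : ℝ) ≤ Real.exp (a*x) := by
    calc (a*x)^m / (m.factorial : ℝ)
        ≤ ∑ i ∈ Finset.range (m+1), (a*x)^i / (i.factorial : ℝ) :=
          Finset.single_le_sum (f := fun i => (a*x)^i / (i.factorial : ℝ))
            (fun i _ => by positivity) (Finset.self_mem_range_succ m)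
      _ ≤ Real.exp (a*x) := Real.sum_le_exp_of_nonneg (by positivity) _
  have hfac : (0:ℝ) < (m.factorial : ℝ) := by positivity
  have h2 : a^m * x^m ≤ (m.factorial : ℝ) * Real.exp (a*x) := by
    rw [div_le_iff₀ hfac] at h1
    calc a^m * x^m = (a*x)^m := by rw [mul_pow]
      _ ≤ Real.exp (a*x) * (m.factorial : ℝ) := h1
      _ = (m.factorial : ℝ) * Real.exp (a*x) := mul_comm _ _
  rw [Real.exp_neg, ← div_eq_mul_inv, div_le_div_iff₀ (Real.exp_pos _) (pow_pos ha m)]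
  calc x^m * a^m = a^m * x^m := mul_comm _ _
    _ ≤ (m.factorial : ℝ) * Real.exp (a*x) := h2

/-- Exponentially small dependence of the linear frequencies on the depth: for every
h₁ > 0 and k ∈ ℕ there is C_k > 0 (depending only on k and h₁) such that
|∂_h^k (√(j tanh(h j)) − √j)| ≤ C_k e^{−h j} for all j ≥ 1 and h ≥ h₁. -/
theorem freq_asymptotic_exponentially_small (h₁ : ℝ) (hh₁ : 0 < h₁) (k : ℕ) :
    ∃ C : ℝ, 0 < C ∧ ∀ j : ℕ, 1 ≤ j → ∀ h : ℝ, h₁ ≤ h →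
      |iteratedDeriv k
          (fun t : ℝ => Real.sqrt ((j : ℝ) * Real.tanh (t * (j : ℝ))) - Real.sqrt j) h| ≤
        C * Real.exp (-(h * (j : ℝ))) := by
  obtain ⟨H, hH, hform⟩ := key_induction k
  set r := Real.exp (-(2*h₁)) with hr
  have hr1 : r < 1 := by
    rw [hr]
    calc Real.exp (-(2*h₁)) < Real.exp 0 := Real.exp_lt_exp.2 (by linarith)
      _ = 1 := Real.exp_zero
  have hr0 : 0 < r := Real.exp_pos _
  have hsub : Set.Icc (0:ℝ) r ⊆ Set.Ioo (-1:ℝ) 1 := by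
    intro v hv
    exact ⟨by linarith [hv.1], lt_of_le_of_lt hv.2 hr1⟩
  obtain ⟨M, hM⟩ := (isCompact_Icc (a := (0:ℝ)) (b := r)).exists_bound_of_continuousOn
    (hH.continuousOn.mono hsub)
  set M' := max M 0 with hM'
  have hM'0 : 0 ≤ M' := le_max_right _ _
  have hMb : ∀ v ∈ Set.Icc (0:ℝ) r, |H v| ≤ M' := by
    intro v hv
    calc |H v| = ‖H v‖ := rfl
      _ ≤ M := hM v hv
      _ ≤ M' := le_max_left _ _
  set B := ((k+1).factorial : ℝ) / h₁^(k+1) with hB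
  have hB0 : 0 < B := by positivity
  refine ⟨M' * B + 1, by positivity, ?_⟩
  intro j hj h hh
  have hj0 : (0:ℝ) < j := by exact_mod_cast hj
  have hj1 : (1:ℝ) ≤ j := by exact_mod_cast hj
  have hh0 : 0 < h := lt_of_lt_of_le hh₁ hh
  set u := Real.exp (-(2*(h*(j:ℝ)))) with hu
  have hu0 : 0 < u := Real.exp_pos _
  have hur : u ≤ r := by
    rw [hu, hr]
    apply Real.exp_le_exp.2
    nlinarith
  have hval := hform j hj h hh0
  rw [hval]
  have hHb : |H u| ≤ M' := hMb u ⟨le_of_lt hu0, hur⟩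
  have hsq : Real.sqrt (j:ℝ) ≤ (j:ℝ) := by
    have h2 := Real.sqrt_le_sqrt (show (j:ℝ) ≤ (j:ℝ)^2 by nlinarith)
    rwa [Real.sqrt_sq (le_of_lt hj0)] at h2
  have hsq0 : 0 ≤ Real.sqrt (j:ℝ) := Real.sqrt_nonneg _
  have husplit : u = Real.exp (-(h₁*(j:ℝ))) * Real.exp (-(h*(j:ℝ)))
      * Real.exp (-((h - h₁)*(j:ℝ))) := by
    rw [hu, ← Real.exp_add, ← Real.exp_add]
    congr 1
    ring
  have hextra : Real.exp (-((h - h₁)*(j:ℝ))) ≤ 1 := by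
    rw [show (1:ℝ) = Real.exp 0 by rw [Real.exp_zero]]
    apply Real.exp_le_exp.2
    nlinarith
  have habs : |Real.sqrt (j:ℝ) * (j:ℝ)^k * (u * H u)|
      ≤ (j:ℝ)^(k+1) * u * M' := by
    rw [abs_mul (Real.sqrt (j:ℝ) * (j:ℝ)^k), abs_mul u]
    have h1 : |Real.sqrt (j:ℝ) * (j:ℝ)^k| ≤ (j:ℝ)^(k+1) := by
      rw [abs_of_nonneg (by positivity)]
      rw [pow_succ]
      calc Real.sqrt (j:ℝ) * (j:ℝ)^k = (j:ℝ)^k * Real.sqrt (j:ℝ) := mul_comm _ _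
        _ ≤ (j:ℝ)^k * (j:ℝ) := by
            apply mul_le_mul_of_nonneg_left hsq (by positivity)
    have h2 : |u| = u := abs_of_pos hu0
    calc |Real.sqrt (j:ℝ) * (j:ℝ)^k| * (|u| * |H u|)
        ≤ (j:ℝ)^(k+1) * (u * M') := by
          apply mul_le_mul h1 _ (by positivity) (by positivity)
          rw [h2]
          exact mul_le_mul_of_nonneg_left hHb (le_of_lt hu0)
      _ = (j:ℝ)^(k+1) * u * M' := by ring
  calc |Real.sqrt (j:ℝ) * (j:ℝ)^k * (u * H u)| ≤ (j:ℝ)^(k+1) * u * M' := habs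
    _ ≤ (j:ℝ)^(k+1) * (Real.exp (-(h₁*(j:ℝ))) * Real.exp (-(h*(j:ℝ)))) * M' := by
        apply mul_le_mul_of_nonneg_right _ hM'0
        apply mul_le_mul_of_nonneg_left _ (by positivity)
        rw [husplit]
        nlinarith [Real.exp_pos (-(h₁*(j:ℝ))), Real.exp_pos (-(h*(j:ℝ))),
          Real.exp_pos (-((h - h₁)*(j:ℝ)))]
    _ = ((j:ℝ)^(k+1) * Real.exp (-(h₁*(j:ℝ)))) * M' * Real.exp (-(h*(j:ℝ))) := by ring
    _ ≤ B * M' * Real.exp (-(h*(j:ℝ))) := by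
        apply mul_le_mul_of_nonneg_right _ (le_of_lt (Real.exp_pos _))
        apply mul_le_mul_of_nonneg_right _ hM'0
        exact poly_exp h₁ hh₁ (k+1) (j:ℝ) (le_of_lt hj0)
    _ ≤ (M' * B + 1) * Real.exp (-(h*(j:ℝ))) := by
        apply mul_le_mul_of_nonneg_right _ (le_of_lt (Real.exp_pos _))
        nlinarith
end
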